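/- Every extreme point u of the feasible set F of the relaxed Multiple Choice Knapsack Problem has the property that all of its blocks u_i are one-hot except at most one, and the exceptional block has at most two nonzero entries. -/
import Mathlib

/-!
Relaxed Multiple Choice Knapsack Problem (MCKP).
Every extreme point of the feasible set has all blocks one-hot except
at most one, and the exceptional block has at most two nonzero entries.
-/

theorem mckp_extreme_point_one_hot_except_one_block_two_nonzeros
    (k n : ℕ) (hk : 1 ≤ k) (hn : 1 ≤ n)
    (N : Fin k → Finset (Fin n))
    (hNne : ∀ i, (N i).Nonempty)
    (hNdisj : ∀ i i' : Fin k, i ≠ i' → Disjoint (N i) (N i'))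
    (hNcover : ∀ j : Fin n, ∃ i : Fin k, j ∈ N i)
    (t : Fin n → ℝ) (T : ℝ)
    (F : Set (Fin n → ℝ))
    (hF : F = {u : Fin n → ℝ |
      (∀ j, 0 ≤ u j) ∧ (∀ i, ∑ j ∈ N i, u j = 1) ∧
      ∑ i : Fin k, ∑ j ∈ N i, t j * u j ≤ T})
    (u : Fin n → ℝ) (hu : u ∈ Set.extremePoints ℝ F) :
    ∃ i₀ : Fin k,
      (∀ i : Fin k, i ≠ i₀ → {j : Fin n | j ∈ N i ∧ u j ≠ 0}.ncard = 1) ∧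
      {j : Fin n | j ∈ N i₀ ∧ u j ≠ 0}.ncard ≤ 2 := by
  classical
  subst hF
  rw [mem_extremePoints] at hu
  obtain ⟨huF, hext⟩ := hu
  obtain ⟨hpos, hsum, hcost⟩ := huF
  -- membership characterization
  have hmemiff : ∀ (p : Fin n) (ip : Fin k), p ∈ N ip → ∀ i'' : Fin k,
      (p ∈ N i'' ↔ i'' = ip) := by
    intro p ip hp i''
    constructor
    · intro hp'
      by_contra hne
      exact (Finset.disjoint_left.mp (hNdisj i'' ip hne)) hp' hp
    · rintro rfl; exact hp
  -- partition sum lemma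
  have hpart : ∀ f : Fin n → ℝ, ∑ i : Fin k, ∑ j ∈ N i, f j = ∑ j : Fin n, f j := by
    intro f
    rw [← Finset.sum_biUnion (fun i _ i' _ h => hNdisj i i' h)]
    apply Finset.sum_congr _ (fun _ _ => rfl)
    ext j
    simp only [Finset.mem_biUnion, Finset.mem_univ, true_and, iff_true]
    exact hNcover j
  -- key perturbation lemma
  have key : ∀ d : Fin n → ℝ, d ≠ 0 → (∀ i, ∑ j ∈ N i, d j = 0) →
      (∑ j : Fin n, t j * d j = 0) → (∀ j, d j ≠ 0 → 0 < u j) → False := by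
    intro d hd hdsum hdcost hdsupp
    set s := Finset.univ.filter (fun j => d j ≠ 0) with hs
    have hsne : s.Nonempty := by
      rcases Function.ne_iff.mp hd with ⟨j, hj⟩
      exact ⟨j, by simp [hs]; exact hj⟩
    set ε := s.inf' hsne (fun j => u j / |d j|) with hε
    have hεpos : 0 < ε := by
      rw [hε, Finset.lt_inf'_iff]
      intro j hj
      have hdj : d j ≠ 0 := by simpa [hs] using hj
      exact div_pos (hdsupp j hdj) (abs_pos.mpr hdj)
    have hbound : ∀ j, ε * |d j| ≤ u j := by
      intro j
      by_cases hdj : d j = 0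
      · simp [hdj]; exact hpos j
      · have hle : ε ≤ u j / |d j| := Finset.inf'_le _ (by simp [hs]; exact hdj)
        rwa [le_div_iff₀ (abs_pos.mpr hdj)] at hle
    have habs : ∀ j, -(ε * |d j|) ≤ ε * d j ∧ ε * d j ≤ ε * |d j| := by
      intro j
      constructor
      · nlinarith [neg_abs_le (d j)]
      · nlinarith [le_abs_self (d j)]
    have hmemx : ∀ σ : ℝ, σ = 1 ∨ σ = -1 →
        (fun j => u j + σ * (ε * d j)) ∈ {v : Fin n → ℝ |
          (∀ j, 0 ≤ v j) ∧ (∀ i, ∑ j ∈ N i, v j = 1) ∧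
          ∑ i : Fin k, ∑ j ∈ N i, t j * v j ≤ T} := by
      intro σ hσ
      refine ⟨?_, ?_, ?_⟩
      · intro j
        rcases habs j with ⟨h1, h2⟩
        have hb := hbound j
        rcases hσ with rfl | rfl <;> (dsimp only; linarith)
      · intro i
        have : ∑ j ∈ N i, (u j + σ * (ε * d j))
            = ∑ j ∈ N i, u j + σ * ε * ∑ j ∈ N i, d j := by
          rw [Finset.mul_sum, Finset.sum_add_distrib]
          congr 1
          exact Finset.sum_congr rfl (fun j _ => by ring)
        rw [this, hsum i, hdsum i]; ring
      · have : ∑ i : Fin k, ∑ j ∈ N i, t j * (u j + σ * (ε * d j))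
            = ∑ i : Fin k, ∑ j ∈ N i, t j * u j
              + σ * ε * ∑ i : Fin k, ∑ j ∈ N i, t j * d j := by
          rw [Finset.mul_sum, ← Finset.sum_add_distrib]
          refine Finset.sum_congr rfl (fun i _ => ?_)
          rw [Finset.mul_sum, ← Finset.sum_add_distrib]
          exact Finset.sum_congr rfl (fun j _ => by ring)
        rw [this, hpart (fun j => t j * d j), hdcost]
        simpa using hcost
    have hx := hmemx 1 (Or.inl rfl)
    have hy := hmemx (-1) (Or.inr rfl)
    have hseg : u ∈ openSegment ℝ (fun j => u j + 1 * (ε * d j))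
        (fun j => u j + (-1) * (ε * d j)) := by
      refine ⟨1/2, 1/2, by norm_num, by norm_num, by norm_num, ?_⟩
      funext j
      simp only [Pi.add_apply, Pi.smul_apply, smul_eq_mul]
      ring
    obtain ⟨hxu, hyu⟩ := hext _ hx _ hy hseg
    rcases Function.ne_iff.mp hd with ⟨j, hj⟩
    have := congrFun hxu j
    simp only [one_mul] at this
    have : ε * d j = 0 := by linarith
    rcases mul_eq_zero.mp this with h | h
    · exact absurd h (ne_of_gt hεpos)
    · exact hj h
  -- two-pair perturbation
  have key2 : ∀ (i i' : Fin k) (j1 j2 j3 j4 : Fin n),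
      j1 ∈ N i → j2 ∈ N i → j3 ∈ N i' → j4 ∈ N i' →
      j1 ≠ j2 → j3 ≠ j4 → j2 ≠ j3 → j2 ≠ j4 → j1 ≠ j4 →
      0 < u j1 → 0 < u j2 → 0 < u j3 → 0 < u j4 → False := by
    intro i i' j1 j2 j3 j4 h1 h2 h3 h4 h12 h34 h23 h24 h14 hu1 hu2 hu3 hu4
    set a := t j1 - t j2 with ha
    set b := t j3 - t j4 with hb
    obtain ⟨c1, c2, hzero, hone⟩ : ∃ c1 c2 : ℝ, c1 * a + c2 * b = 0 ∧
        (c1 = 1 ∧ c2 = 0 ∨ (c1 = b ∧ c2 = -a ∧ ¬(a = 0 ∧ b = 0))) := by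
      by_cases hab : a = 0 ∧ b = 0
      · exact ⟨1, 0, by rw [hab.1]; ring, Or.inl ⟨rfl, rfl⟩⟩
      · exact ⟨b, -a, by ring, Or.inr ⟨rfl, rfl, hab⟩⟩
    set d : Fin n → ℝ := fun j =>
      c1 * ((if j = j1 then 1 else 0) - (if j = j2 then 1 else 0))
      + c2 * ((if j = j3 then 1 else 0) - (if j = j4 then 1 else 0)) with hd
    -- values at the four points
    have dj2 : d j2 = -c1 := by
      simp [hd, h12.symm, h23, h24]
    have dj4 : d j4 = -c2 := by
      simp [hd, h14.symm, h24.symm, h34.symm]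
    refine key d ?_ ?_ ?_ ?_
    · rcases hone with ⟨hc1, hc2⟩ | ⟨hc1, hc2, hab⟩
      · intro h
        have := congrFun h j2
        rw [dj2, hc1] at this
        norm_num at this
      · by_cases hbz : b = 0
        · have haz : a ≠ 0 := fun h => hab ⟨h, hbz⟩
          intro h
          have := congrFun h j4
          rw [dj4, hc2] at this
          simp at this
          exact haz this
        · intro h
          have := congrFun h j2
          rw [dj2, hc1] at this
          simp at this
          exact hbz this
    · intro i''
      have hsum1 : ∀ (p : Fin n), ∑ j ∈ N i'', (if j = p then (1:ℝ) else 0)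
          = if p ∈ N i'' then 1 else 0 := fun p => Finset.sum_ite_eq' (N i'') p (fun _ => 1)
      have expand : ∑ j ∈ N i'', d j
          = c1 * ((if j1 ∈ N i'' then (1:ℝ) else 0) - (if j2 ∈ N i'' then 1 else 0))
          + c2 * ((if j3 ∈ N i'' then (1:ℝ) else 0) - (if j4 ∈ N i'' then 1 else 0)) := by
        simp only [hd, Finset.sum_add_distrib, ← Finset.mul_sum, Finset.sum_sub_distrib, hsum1]
      rw [expand]
      simp only [hmemiff j1 i h1 i'', hmemiff j2 i h2 i'', hmemiff j3 i' h3 i'',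
        hmemiff j4 i' h4 i'']
      ring
    · have hsum2 : ∀ (p : Fin n), ∑ j : Fin n, (if j = p then t j else 0) = t p := by
        intro p
        rw [Finset.sum_ite_eq' Finset.univ p t]
        simp
      have expand : ∑ j : Fin n, t j * d j
          = c1 * (t j1 - t j2) + c2 * (t j3 - t j4) := by
        have : ∀ j, t j * d j = c1 * ((if j = j1 then t j else 0) - (if j = j2 then t j else 0))
            + c2 * ((if j = j3 then t j else 0) - (if j = j4 then t j else 0)) := by
          intro j
          simp only [hd]
          split_ifs <;> ring
        rw [Finset.sum_congr rfl (fun j _ => this j)]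
        simp only [Finset.sum_add_distrib, ← Finset.mul_sum, Finset.sum_sub_distrib, hsum2]
      rw [expand, ← ha, ← hb]
      exact hzero
    · intro j hj
      by_cases e1 : j = j1
      · rw [e1]; exact hu1
      by_cases e2 : j = j2
      · rw [e2]; exact hu2
      by_cases e3 : j = j3
      · rw [e3]; exact hu3
      by_cases e4 : j = j4
      · rw [e4]; exact hu4
      exfalso; apply hj; simp [hd, e1, e2, e3, e4]
  -- the support finsets
  set S : Fin k → Finset (Fin n) := fun i => (N i).filter (fun j => u j ≠ 0) with hS
  have hset : ∀ i, {j : Fin n | j ∈ N i ∧ u j ≠ 0}.ncard = (S i).card := by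
    intro i
    rw [show {j : Fin n | j ∈ N i ∧ u j ≠ 0} = ↑(S i) by ext j; simp [hS]]
    exact Set.ncard_coe_finset _
  have hSmem : ∀ i j, j ∈ S i → j ∈ N i ∧ 0 < u j := by
    intro i j hj
    simp only [hS, Finset.mem_filter] at hj
    exact ⟨hj.1, lt_of_le_of_ne (hpos j) (Ne.symm hj.2)⟩
  have hScard : ∀ i, 1 ≤ (S i).card := by
    intro i
    rcases Finset.eq_empty_or_nonempty (S i) with he | hne
    · exfalso
      have : ∑ j ∈ N i, u j = 0 := by
        apply Finset.sum_eq_zero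
        intro j hj
        by_contra hz
        exact Finset.eq_empty_iff_forall_notMem.mp he j (by simp [hS, hj, hz])
      rw [hsum i] at this; norm_num at this
    · exact Finset.card_pos.mpr hne
  by_cases hA : ∃ i i' : Fin k, i ≠ i' ∧ 2 ≤ (S i).card ∧ 2 ≤ (S i').card
  · exfalso
    obtain ⟨i, i', hii, hci, hci'⟩ := hA
    obtain ⟨j1, hj1, j2, hj2, h12⟩ := Finset.one_lt_card.mp hci
    obtain ⟨j3, hj3, j4, hj4, h34⟩ := Finset.one_lt_card.mp hci'
    obtain ⟨hj1N, hj1u⟩ := hSmem _ _ hj1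
    obtain ⟨hj2N, hj2u⟩ := hSmem _ _ hj2
    obtain ⟨hj3N, hj3u⟩ := hSmem _ _ hj3
    obtain ⟨hj4N, hj4u⟩ := hSmem _ _ hj4
    have hd : ∀ p q : Fin n, p ∈ N i → q ∈ N i' → p ≠ q := by
      intro p q hp hq he
      subst he
      exact (Finset.disjoint_left.mp (hNdisj i i' hii)) hp hq
    exact key2 i i' j1 j2 j3 j4 hj1N hj2N hj3N hj4N h12 h34
      (hd j2 j3 hj2N hj3N) (hd j2 j4 hj2N hj4N) (hd j1 j4 hj1N hj4N)
      hj1u hj2u hj3u hj4u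
  · push_neg at hA
    by_cases hB : ∃ i : Fin k, 2 ≤ (S i).card
    · obtain ⟨i₀, hi₀⟩ := hB
      refine ⟨i₀, ?_, ?_⟩
      · intro i hi
        rw [hset i]
        have h2 := hA i₀ i (Ne.symm hi) hi₀
        have h1 := hScard i
        omega
      · rw [hset i₀]
        by_contra hc
        push_neg at hc
        have h3 : 3 ≤ (S i₀).card := hc
        obtain ⟨j1, hj1, j2, hj2, h12⟩ := Finset.one_lt_card.mp hi₀
        have hcard' : 1 ≤ ((S i₀).erase j1 |>.erase j2).card := by
          have := Finset.card_erase_of_mem (Finset.mem_erase.mpr ⟨Ne.symm h12, hj2⟩)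
          have := Finset.card_erase_of_mem hj1
          omega
        obtain ⟨j3, hj3⟩ := Finset.card_pos.mp hcard'
        obtain ⟨h32, hj3'⟩ := Finset.mem_erase.mp hj3
        obtain ⟨h31, hj3''⟩ := Finset.mem_erase.mp hj3'
        obtain ⟨hj1N, hj1u⟩ := hSmem _ _ hj1
        obtain ⟨hj2N, hj2u⟩ := hSmem _ _ hj2
        obtain ⟨hj3N, hj3u⟩ := hSmem _ _ hj3''
        exact key2 i₀ i₀ j1 j2 j1 j3 hj1N hj2N hj1N hj3N h12 (Ne.symm h31)
          (Ne.symm h12) (Ne.symm h32) (Ne.symm h31) hj1u hj2u hj1u hj3u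
    · push_neg at hB
      refine ⟨⟨0, hk⟩, ?_, ?_⟩
      · intro i _
        rw [hset i]
        have := hB i
        have := hScard i
        omega
      · rw [hset _]
        have := hB ⟨0, hk⟩
        omega
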